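/- In a dual logit, the deferral probability at a binary menu is nondecreasing in one alternative's utility in one dimension if and only if that alternative's utility is weakly lower in the other dimension. Precisely: fix reals v₁a, v₁b, v₂a > 0 and define g : (0,∞) → ℝ by g(t) = 1 − (v₁a·v₂a + v₁b·t)/((v₁a + v₁b)·(v₂a + t)) (the deferral probability at {a,b} when v₁(a)=v₁a, v₁(b)=v₁b, v₂(a)=v₂a, v₂(b)=t). Then g is monotone nondecreasing on (0,∞) if and only if v₁a ≥ v₁b. -/
import Mathlib


/-- In a dual logit, the deferral probability at a binary menu `{a,b}` is nondecreasing
in `v₂(b)` iff `v₁(a) ≥ v₁(b)`. -/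
theorem stmt7 (v₁a v₁b v₂a : ℝ) (h1 : 0 < v₁a) (h2 : 0 < v₁b) (h3 : 0 < v₂a) :
    (∀ s t : ℝ, 0 < s → s ≤ t →
      1 - (v₁a * v₂a + v₁b * s) / ((v₁a + v₁b) * (v₂a + s))
        ≤ 1 - (v₁a * v₂a + v₁b * t) / ((v₁a + v₁b) * (v₂a + t)))
      ↔ v₁a ≥ v₁b := by
  constructor
  · intro h
    have := h 1 2 one_pos one_le_two
    have hd1 : 0 < (v₁a + v₁b) * (v₂a + 1) := by positivity
    have hd2 : 0 < (v₁a + v₁b) * (v₂a + 2) := by positivity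
    have h' : (v₁a * v₂a + v₁b * 2) / ((v₁a + v₁b) * (v₂a + 2))
        ≤ (v₁a * v₂a + v₁b * 1) / ((v₁a + v₁b) * (v₂a + 1)) := by linarith
    rw [div_le_div_iff₀ hd2 hd1] at h'
    by_contra hc
    push_neg at hc
    nlinarith [mul_pos (mul_pos (add_pos h1 h2) h3) (sub_pos.2 hc)]
  · intro h s t hs hst
    have ht : 0 < t := lt_of_lt_of_le hs hst
    have hd1 : 0 < (v₁a + v₁b) * (v₂a + s) := by positivity
    have hd2 : 0 < (v₁a + v₁b) * (v₂a + t) := by positivity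
    have h' : (v₁a * v₂a + v₁b * t) / ((v₁a + v₁b) * (v₂a + t))
        ≤ (v₁a * v₂a + v₁b * s) / ((v₁a + v₁b) * (v₂a + s)) := by
      rw [div_le_div_iff₀ hd2 hd1]
      nlinarith [mul_nonneg (mul_nonneg h3.le (sub_nonneg.2 hst)) (sub_nonneg.2 h)]
    linarith
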